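/- arXiv:2511.20168 — 4 statements merged into one kernel-verified Lean document; each statement's English description precedes it below -/
import Mathlib

section
/- Let μ, η, β > 0. Define Ψ₂(t,s) = ∏_{k=s+1}^{t} (β + μηβ/k). Then for all integers t ≥ 2 and 1 ≤ s < t, 0 < Ψ₂(t,s) ≤ β^{t-s} (t/s)^{μη}. -/
lemma sum_inv_le_log (s : ℕ) (hs : 1 ≤ s) :
    ∀ t : ℕ, s ≤ t →
      ∑ k ∈ Finset.Icc (s + 1) t, (1 : ℝ) / k ≤ Real.log t - Real.log s := by
  intro t ht
  induction t, ht using Nat.le_induction with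
  | base => simp
  | succ t ht ih =>
    have hts : s + 1 ≤ t + 1 := by omega
    rw [Finset.sum_Icc_succ_top hts]
    have ht0 : (0 : ℝ) < t := by
      have : 1 ≤ t := le_trans hs ht
      exact_mod_cast this
    have ht1 : (0 : ℝ) < (t : ℝ) + 1 := by linarith
    have key : (1 : ℝ) / (t + 1) ≤ Real.log (t + 1) - Real.log t := by
      have h := Real.log_le_sub_one_of_pos (x := (t : ℝ) / (t + 1)) (by positivity)
      rw [Real.log_div (ne_of_gt ht0) (ne_of_gt ht1)] at h
      have : (t : ℝ) / (t + 1) - 1 = -(1 / (t + 1)) := by field_simp; ring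
      linarith [this ▸ h]
    have := ih
    push_cast
    linarith

theorem psi2_bounds_alpha_eq_one
    (μ η β : ℝ) (hμ : 0 < μ) (hη : 0 < η) (hβ : 0 < β)
    (t s : ℕ) (ht : 2 ≤ t) (hs1 : 1 ≤ s) (hst : s < t) :
    0 < ∏ k ∈ Finset.Icc (s + 1) t, (β + μ * η * β / (k : ℝ)) ∧
    ∏ k ∈ Finset.Icc (s + 1) t, (β + μ * η * β / (k : ℝ))
      ≤ β ^ (t - s) * ((t : ℝ) / (s : ℝ)) ^ (μ * η) := by
  have hc : 0 < μ * η := mul_pos hμ hη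
  have hkpos : ∀ k ∈ Finset.Icc (s + 1) t, (0 : ℝ) < k := by
    intro k hk
    simp only [Finset.mem_Icc] at hk
    have : 0 < k := by omega
    exact_mod_cast this
  constructor
  · apply Finset.prod_pos
    intro k hk
    have := hkpos k hk
    positivity
  · have hsplit : ∀ k ∈ Finset.Icc (s + 1) t,
        β + μ * η * β / (k : ℝ) = β * (1 + μ * η / k) := by
      intro k hk
      have := hkpos k hk
      field_simp
    rw [Finset.prod_congr rfl hsplit, Finset.prod_mul_distrib, Finset.prod_const,
      Nat.card_Icc]
    have hcard : t + 1 - (s + 1) = t - s := by omega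
    rw [hcard]
    have hs0 : (0 : ℝ) < s := by exact_mod_cast hs1
    have ht0 : (0 : ℝ) < t := by positivity
    have hprod : ∏ k ∈ Finset.Icc (s + 1) t, (1 + μ * η / (k : ℝ))
        ≤ ((t : ℝ) / (s : ℝ)) ^ (μ * η) := by
      calc ∏ k ∈ Finset.Icc (s + 1) t, (1 + μ * η / (k : ℝ))
          ≤ ∏ k ∈ Finset.Icc (s + 1) t, Real.exp (μ * η / (k : ℝ)) := by
            apply Finset.prod_le_prod
            · intro k hk
              have := hkpos k hk
              positivity
            · intro k hk
              have h := Real.add_one_le_exp (μ * η / (k : ℝ))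
              linarith
        _ = Real.exp (∑ k ∈ Finset.Icc (s + 1) t, μ * η / (k : ℝ)) :=
            (Real.exp_sum _ _).symm
        _ ≤ Real.exp (μ * η * (Real.log t - Real.log s)) := by
            apply Real.exp_le_exp.mpr
            have : ∑ k ∈ Finset.Icc (s + 1) t, μ * η / (k : ℝ)
                = μ * η * ∑ k ∈ Finset.Icc (s + 1) t, (1 : ℝ) / k := by
              rw [Finset.mul_sum]
              exact Finset.sum_congr rfl (fun k _ => by ring)
            rw [this]
            exact mul_le_mul_of_nonneg_left
              (sum_inv_le_log s hs1 t (le_of_lt hst)) (le_of_lt hc)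
        _ = ((t : ℝ) / (s : ℝ)) ^ (μ * η) := by
            rw [Real.rpow_def_of_pos (by positivity),
              Real.log_div (ne_of_gt ht0) (ne_of_gt hs0)]
            ring_nf
    have hβpow : (0 : ℝ) ≤ β ^ (t - s) := le_of_lt (pow_pos hβ _)
    exact mul_le_mul_of_nonneg_left hprod hβpow
end

section
/- Let μ, η > 0, α > 1, β ∈ [0,1). Define S(t,α,n) = ∑_{s=2}^{t} Ψ₂(t,s,α)/s^n where Ψ₂(t,s,α) = ∏_{k=s+1}^{t}(β + μηβ/k^α) and n > 0. Then t^n · S(t,α,n) converges as t → ∞ to 1/(1-β); in particular S(t,α,n) = Θ(1/t^n). -/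
open Filter Finset Real Asymptotics

theorem sum_psi2_asymptotics
    (μ η β α n : ℝ) (hμ : 0 < μ) (hη : 0 < η) (hα : 1 < α) (hn : 0 < n)
    (hβ0 : 0 ≤ β) (hβ1 : β < 1) :
    Filter.Tendsto
      (fun t : ℕ => (t : ℝ) ^ n *
        ∑ s ∈ Finset.Icc 2 t,
          (∏ k ∈ Finset.Icc (s + 1) t, (β + μ * η * β / (k : ℝ) ^ α)) / (s : ℝ) ^ n)
      Filter.atTop (nhds (1 / (1 - β))) ∧
    (fun t : ℕ => ∑ s ∈ Finset.Icc 2 t,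
        (∏ k ∈ Finset.Icc (s + 1) t, (β + μ * η * β / (k : ℝ) ^ α)) / (s : ℝ) ^ n)
      =Θ[Filter.atTop] (fun t : ℕ => 1 / (t : ℝ) ^ n) := by
  have hc0 : 0 < μ * η := mul_pos hμ hη
  set c : ℝ := μ * η with hc
  set f : ℕ → ℝ := fun t => ∑ s ∈ Finset.Icc 2 t,
      (∏ k ∈ Finset.Icc (s + 1) t, (β + c * β / (k : ℝ) ^ α)) / (s : ℝ) ^ n with hf
  set P : ℕ → ℕ → ℝ := fun a b => ∏ k ∈ Finset.Icc (a + 1) b, (1 + c / (k : ℝ) ^ α) with hP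
  set F : ℕ → ℕ → ℝ := fun t j =>
      if j + 2 ≤ t then β ^ j * P (t - j) t * ((t : ℝ) / ((t - j : ℕ) : ℝ)) ^ n else 0 with hFdef
  set m : ℕ := ⌈n⌉₊ with hm
  -- basic facts
  have hα0 : (0:ℝ) < α := lt_trans one_pos hα
  have hfnonneg : ∀ t, 0 ≤ f t := by
    intro t
    apply Finset.sum_nonneg
    intro s _
    apply div_nonneg _ (Real.rpow_nonneg (Nat.cast_nonneg _) _)
    apply Finset.prod_nonneg
    intro k _
    have : 0 ≤ c * β / (k:ℝ)^α :=
      div_nonneg (mul_nonneg hc0.le hβ0) (Real.rpow_nonneg (Nat.cast_nonneg _) _)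
    linarith
  have hP1 : ∀ a b, 1 ≤ P a b := by
    intro a b
    show (1:ℝ) ≤ ∏ k ∈ Finset.Icc (a+1) b, (1 + c / (k:ℝ)^α)
    calc (1:ℝ) = ∏ _k ∈ Finset.Icc (a+1) b, (1:ℝ) := Finset.prod_const_one.symm
      _ ≤ ∏ k ∈ Finset.Icc (a+1) b, (1 + c / (k:ℝ)^α) := by
          apply Finset.prod_le_prod (fun k _ => zero_le_one)
          intro k _
          have : 0 ≤ c / (k:ℝ)^α := div_nonneg hc0.le (Real.rpow_nonneg (Nat.cast_nonneg _) _)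
          linarith
  -- summable bound for exponential estimate
  have hsum : Summable (fun k : ℕ => c / (k:ℝ)^α) := by
    have : Summable (fun k : ℕ => ((k:ℝ)^α)⁻¹) := Real.summable_nat_rpow_inv.mpr hα
    simpa [div_eq_mul_inv] using this.mul_left c
  set K : ℝ := ∑' k : ℕ, c / (k:ℝ)^α with hK
  set B : ℝ := Real.exp K with hB
  have hB1 : 1 ≤ B := by
    apply Real.one_le_exp
    exact tsum_nonneg (fun k => div_nonneg hc0.le (Real.rpow_nonneg (Nat.cast_nonneg _) _))
  have hPB : ∀ a b, P a b ≤ B := by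
    intro a b
    show (∏ k ∈ Finset.Icc (a+1) b, (1 + c / (k:ℝ)^α)) ≤ B
    calc (∏ k ∈ Finset.Icc (a+1) b, (1 + c / (k:ℝ)^α)) ≤ ∏ k ∈ Finset.Icc (a+1) b, Real.exp (c / (k:ℝ)^α) := by
          apply Finset.prod_le_prod
          · intro k _
            have : 0 ≤ c / (k:ℝ)^α := div_nonneg hc0.le (Real.rpow_nonneg (Nat.cast_nonneg _) _)
            linarith
          · intro k _
            have := Real.add_one_le_exp (c / (k:ℝ)^α)
            linarith
      _ = Real.exp (∑ k ∈ Finset.Icc (a+1) b, c / (k:ℝ)^α) := by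
          rw [Real.exp_sum]
      _ ≤ B := by
          apply Real.exp_le_exp.mpr
          exact Summable.sum_le_tsum _ (fun k _ => div_nonneg hc0.le (Real.rpow_nonneg (Nat.cast_nonneg _) _)) hsum
  -- pointwise limit of F t j as t → ∞
  have hRtend : ∀ j : ℕ, Tendsto (fun t : ℕ => ((t : ℝ) / ((t - j : ℕ) : ℝ)) ^ n)
      atTop (nhds 1) := by
    intro j
    have h1 : Tendsto (fun t : ℕ => (t : ℝ) - j) atTop atTop :=
      tendsto_atTop_add_const_right atTop (-(j:ℝ)) tendsto_natCast_atTop_atTop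
    have h2 : Tendsto (fun t : ℕ => 1 + (j : ℝ) / ((t : ℝ) - j)) atTop (nhds 1) := by
      have := Tendsto.div_atTop (tendsto_const_nhds (x := (j:ℝ))) h1
      simpa using tendsto_const_nhds.add this
    have h3 : Tendsto (fun t : ℕ => (1 + (j : ℝ) / ((t : ℝ) - j)) ^ n) atTop (nhds 1) := by
      have := h2.rpow_const (p := n) (Or.inl one_ne_zero)
      simpa using this
    apply h3.congr'
    filter_upwards [eventually_ge_atTop (j+1)] with t ht
    have hjt : j ≤ t := by omega
    have htj : ((t - j : ℕ) : ℝ) = (t:ℝ) - j := by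
      push_cast [Nat.cast_sub hjt]; ring
    have hpos : (0:ℝ) < (t:ℝ) - j := by
      have : (j:ℝ) + 1 ≤ (t:ℝ) := by exact_mod_cast ht
      linarith
    rw [htj]
    congr 1
    field_simp
    ring
  have hPtend : ∀ j : ℕ, Tendsto (fun t : ℕ => P (t - j) t) atTop (nhds 1) := by
    intro j
    have hup : Tendsto (fun t : ℕ => (1 + c / ((t - j + 1 : ℕ) : ℝ) ^ α) ^ j) atTop (nhds 1) := by
      have h1 : Tendsto (fun t : ℕ => ((t - j + 1 : ℕ) : ℝ)) atTop atTop := by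
        apply tendsto_natCast_atTop_atTop.comp
        exact tendsto_atTop_atTop.mpr (fun b => ⟨b + j, fun a ha => by omega⟩)
      have h2 : Tendsto (fun t : ℕ => ((t - j + 1 : ℕ) : ℝ) ^ α) atTop atTop :=
        (tendsto_rpow_atTop hα0).comp h1
      have h3 : Tendsto (fun t : ℕ => 1 + c / ((t - j + 1 : ℕ) : ℝ) ^ α) atTop (nhds 1) := by
        have := Tendsto.div_atTop (tendsto_const_nhds (x := c)) h2
        simpa using tendsto_const_nhds.add this
      simpa using h3.pow j
    apply tendsto_of_tendsto_of_tendsto_of_le_of_le' tendsto_const_nhds hup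
    · exact Eventually.of_forall (fun t => hP1 _ _)
    · filter_upwards [eventually_ge_atTop j] with t ht
      show (∏ k ∈ Finset.Icc (t - j + 1) t, (1 + c / (k:ℝ)^α)) ≤ _
      have hcard : (Finset.Icc (t - j + 1) t).card = j := by
        rw [Nat.card_Icc]; omega
      calc (∏ k ∈ Finset.Icc (t - j + 1) t, (1 + c / (k:ℝ)^α))
            ≤ (1 + c / ((t - j + 1 : ℕ) : ℝ) ^ α) ^ (Finset.Icc (t - j + 1) t).card := by
            rw [← Finset.prod_const]
            apply Finset.prod_le_prod
            · intro k _
              have : 0 ≤ c / (k:ℝ)^α := div_nonneg hc0.le (Real.rpow_nonneg (Nat.cast_nonneg _) _)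
              linarith
            intro k hk
            have hk1 : t - j + 1 ≤ k := (Finset.mem_Icc.mp hk).1
            have hkpos : (0:ℝ) < ((t - j + 1 : ℕ) : ℝ) := by positivity
            have hle : ((t - j + 1 : ℕ) : ℝ) ^ α ≤ (k : ℝ) ^ α := by
              apply Real.rpow_le_rpow hkpos.le _ hα0.le
              exact_mod_cast hk1
            have hpos : (0:ℝ) < ((t - j + 1 : ℕ) : ℝ) ^ α := Real.rpow_pos_of_pos hkpos α
            have : c / (k : ℝ) ^ α ≤ c / ((t - j + 1 : ℕ) : ℝ) ^ α :=
              div_le_div_of_nonneg_left hc0.le hpos hle |>.trans_eq rfl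
            linarith
        _ = (1 + c / ((t - j + 1 : ℕ) : ℝ) ^ α) ^ j := by rw [hcard]
  have hFtend : ∀ j : ℕ, Tendsto (fun t : ℕ => F t j) atTop (nhds (β ^ j)) := by
    intro j
    have h := ((tendsto_const_nhds (x := β ^ j)).mul (hPtend j)).mul (hRtend j)
    rw [mul_one, mul_one] at h
    apply h.congr'
    filter_upwards [eventually_ge_atTop (j + 2)] with t ht
    show _ = F t j
    rw [hFdef]
    simp only [if_pos ht]
  -- summable dominating sequence
  have hgsum : Summable (fun j : ℕ => B * (((j:ℝ) + 1) ^ m * β ^ j)) := by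
    have hu : (fun j : ℕ => (((j + 1) ^ m : ℕ) : ℝ)) =O[atTop] (fun j : ℕ => ((j ^ m : ℕ) : ℝ)) := by
      apply Asymptotics.IsBigO.of_bound ((2:ℝ) ^ m)
      filter_upwards [eventually_ge_atTop 1] with j hj
      push_cast
      rw [Real.norm_eq_abs, Real.norm_eq_abs, abs_of_nonneg (by positivity),
        abs_of_nonneg (by positivity)]
      calc ((j:ℝ) + 1) ^ m ≤ (2 * (j:ℝ)) ^ m := by
            apply pow_le_pow_left₀ (by positivity)
            have : (1:ℝ) ≤ (j:ℝ) := by exact_mod_cast hj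
            linarith
        _ = 2 ^ m * (j:ℝ) ^ m := by rw [mul_pow]
    have h1 : Summable (fun j : ℕ => ‖(((j + 1) ^ m : ℕ) : ℝ) * β ^ j‖) :=
      summable_norm_mul_geometric_of_norm_lt_one
        (by rwa [Real.norm_eq_abs, abs_of_nonneg hβ0]) hu
    have h2 : Summable (fun j : ℕ => (((j + 1) ^ m : ℕ) : ℝ) * β ^ j) := h1.of_norm
    have h3 : Summable (fun j : ℕ => ((j:ℝ) + 1) ^ m * β ^ j) := by
      apply h2.congr
      intro j
      push_cast
      ring
    exact h3.mul_left B
  -- domination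
  have hdom : ∀ t j, ‖F t j‖ ≤ B * (((j:ℝ) + 1) ^ m * β ^ j) := by
    intro t j
    have hgnn : 0 ≤ B * (((j:ℝ) + 1) ^ m * β ^ j) := by positivity
    rw [hFdef]
    by_cases ht : j + 2 ≤ t
    · simp only [if_pos ht]
      have hs2 : (2:ℝ) ≤ ((t - j : ℕ) : ℝ) := by
        have : 2 ≤ t - j := by omega
        exact_mod_cast this
      have hspos : (0:ℝ) < ((t - j : ℕ) : ℝ) := by linarith
      have htcast : ((t:ℝ)) = ((t - j : ℕ) : ℝ) + j := by
        have h : t - j + j = t := by omega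
        calc ((t:ℝ)) = ((t - j + j : ℕ) : ℝ) := by rw [h]
          _ = ((t - j : ℕ) : ℝ) + j := by push_cast; ring
      have hratio : (t:ℝ) / ((t - j : ℕ) : ℝ) ≤ 1 + (j:ℝ) / 2 := by
        rw [div_le_iff₀ hspos, htcast]
        have h1 : (j:ℝ) * 2 ≤ (j:ℝ) * ((t - j : ℕ) : ℝ) := by
          apply mul_le_mul_of_nonneg_left hs2 (Nat.cast_nonneg _)
        nlinarith
      have hRn : ((t:ℝ) / ((t - j : ℕ) : ℝ)) ^ n ≤ ((j:ℝ) + 1) ^ m := by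
        calc ((t:ℝ) / ((t - j : ℕ) : ℝ)) ^ n ≤ (1 + (j:ℝ) / 2) ^ n := by
              apply Real.rpow_le_rpow (by positivity) hratio hn.le
          _ ≤ (1 + (j:ℝ) / 2) ^ (m : ℝ) := by
              apply Real.rpow_le_rpow_of_exponent_le
                (le_add_of_nonneg_right (by positivity)) (Nat.le_ceil n)
          _ = (1 + (j:ℝ) / 2) ^ m := Real.rpow_natCast _ m
          _ ≤ ((j:ℝ) + 1) ^ m := by
              apply pow_le_pow_left₀ (by positivity)
              have : (0:ℝ) ≤ (j:ℝ) := Nat.cast_nonneg j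
              linarith
      have hRnn : (0:ℝ) ≤ ((t:ℝ) / ((t - j : ℕ) : ℝ)) ^ n :=
        Real.rpow_nonneg (by positivity) n
      have hFnn : 0 ≤ β ^ j * P (t - j) t * ((t:ℝ) / ((t - j : ℕ) : ℝ)) ^ n := by
        apply mul_nonneg (mul_nonneg (pow_nonneg hβ0 j) (by linarith [hP1 (t - j) t])) hRnn
      rw [Real.norm_eq_abs, abs_of_nonneg hFnn]
      calc β ^ j * P (t - j) t * ((t:ℝ) / ((t - j : ℕ) : ℝ)) ^ n
          ≤ β ^ j * B * (((j:ℝ) + 1) ^ m) := by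
            apply mul_le_mul _ hRn hRnn (by positivity)
            exact mul_le_mul_of_nonneg_left (hPB _ _) (pow_nonneg hβ0 j)
        _ = B * (((j:ℝ) + 1) ^ m * β ^ j) := by ring
    · simp only [if_neg ht]
      simpa using hgnn
  -- Tannery / dominated convergence
  have hT : Tendsto (fun t : ℕ => ∑' j : ℕ, F t j) atTop (nhds (1 / (1 - β))) := by
    have := tendsto_tsum_of_dominated_convergence hgsum hFtend
      (Eventually.of_forall hdom)
    rwa [tsum_geometric_of_lt_one hβ0 hβ1, ← one_div] at this
  -- identity between tsum of F and the original sum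
  have hid : ∀ t : ℕ, 2 ≤ t → (∑' j : ℕ, F t j) = (t:ℝ) ^ n * f t := by
    intro t ht2
    have hsupp : ∀ j ∉ Finset.range (t - 1), F t j = 0 := by
      intro j hj
      rw [Finset.mem_range, not_lt] at hj
      rw [hFdef]
      simp only [ite_eq_right_iff]
      intro hcon
      omega
    rw [tsum_eq_sum hsupp, hf, Finset.mul_sum]
    apply Finset.sum_nbij' (fun j => t - j) (fun s => t - s)
    · intro j hj
      rw [Finset.mem_range] at hj
      rw [Finset.mem_Icc]
      omega
    · intro s hs
      rw [Finset.mem_Icc] at hs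
      rw [Finset.mem_range]
      omega
    · intro j hj
      rw [Finset.mem_range] at hj
      omega
    · intro s hs
      rw [Finset.mem_Icc] at hs
      omega
    · intro j hj
      rw [Finset.mem_range] at hj
      have hjt : j + 2 ≤ t := by omega
      rw [hFdef]
      simp only [if_pos hjt]
      have hcard : (Finset.Icc (t - j + 1) t).card = j := by
        rw [Nat.card_Icc]; omega
      have hprod : (∏ k ∈ Finset.Icc (t - j + 1) t, (β + c * β / (k:ℝ) ^ α))
          = β ^ j * P (t - j) t := by
        rw [hP]
        calc (∏ k ∈ Finset.Icc (t - j + 1) t, (β + c * β / (k:ℝ) ^ α))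
            = ∏ k ∈ Finset.Icc (t - j + 1) t, (β * (1 + c / (k:ℝ) ^ α)) := by
              apply Finset.prod_congr rfl
              intro k _
              ring
          _ = (∏ _k ∈ Finset.Icc (t - j + 1) t, β) *
              ∏ k ∈ Finset.Icc (t - j + 1) t, (1 + c / (k:ℝ) ^ α) := Finset.prod_mul_distrib
          _ = β ^ j * ∏ k ∈ Finset.Icc (t - j + 1) t, (1 + c / (k:ℝ) ^ α) := by
              rw [Finset.prod_const, hcard]
      rw [hprod]
      have hdiv : ((t:ℝ) / ((t - j : ℕ) : ℝ)) ^ n = (t:ℝ) ^ n / ((t - j : ℕ) : ℝ) ^ n :=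
        Real.div_rpow (Nat.cast_nonneg _) (Nat.cast_nonneg _) n
      rw [hdiv]
      ring
  have hmain : Tendsto (fun t : ℕ => (t:ℝ) ^ n * f t) atTop (nhds (1 / (1 - β))) := by
    apply hT.congr'
    filter_upwards [eventually_ge_atTop 2] with t ht
    exact hid t ht
  refine ⟨hmain, ?_⟩
  set L : ℝ := 1 / (1 - β) with hL
  have hL0 : 0 < L := by
    rw [hL]
    apply div_pos one_pos
    linarith
  constructor
  · apply Asymptotics.IsBigO.of_bound (L + 1)
    filter_upwards [hmain.eventually_lt_const (lt_add_one L), eventually_ge_atTop 1]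
      with t h1 ht1
    have htpos : (0:ℝ) < (t:ℝ) ^ n := by
      apply Real.rpow_pos_of_pos
      exact_mod_cast Nat.lt_of_lt_of_le Nat.zero_lt_one ht1
    show ‖f t‖ ≤ (L + 1) * ‖1 / (t:ℝ) ^ n‖
    rw [Real.norm_eq_abs, abs_of_nonneg (hfnonneg t), Real.norm_eq_abs,
      abs_of_nonneg (by positivity : (0:ℝ) ≤ 1 / (t:ℝ) ^ n), mul_one_div,
      le_div_iff₀ htpos]
    rw [mul_comm]
    exact h1.le
  · apply Asymptotics.IsBigO.of_bound (2 / L)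
    filter_upwards [hmain.eventually_const_lt (half_lt_self hL0), eventually_ge_atTop 1]
      with t h1 ht1
    have htpos : (0:ℝ) < (t:ℝ) ^ n := by
      apply Real.rpow_pos_of_pos
      exact_mod_cast Nat.lt_of_lt_of_le Nat.zero_lt_one ht1
    show ‖1 / (t:ℝ) ^ n‖ ≤ 2 / L * ‖f t‖
    simp only [Real.norm_eq_abs]
    rw [abs_of_nonneg (hfnonneg t),
      abs_of_nonneg (by positivity : (0:ℝ) ≤ 1 / (t:ℝ) ^ n),
      div_le_iff₀ htpos]
    have key : L / 2 ≤ (t:ℝ) ^ n * f t := h1.le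
    calc (1:ℝ) = (2 / L) * (L / 2) := by field_simp
      _ ≤ (2 / L) * ((t:ℝ) ^ n * f t) := by
          apply mul_le_mul_of_nonneg_left key (by positivity)
      _ = 2 / L * f t * (t:ℝ) ^ n := by ring
end

section
/- Let μ, η > 0, 0 < α < 1 with μη < 2^α, and n > 0. Define Ψ₁(t,s) = ∏_{k=s+1}^{t}(1 - μη/k^α) and S(t) = ∑_{s=2}^{t} ((-1)^s / s^n) Ψ₁(t,s). Then tⁿ S(t) - (-1)^t / 2 → 0 as t → ∞; in particular |S(t)| = Θ(1/t^n). -/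
open Filter Finset Real



noncomputable def Spsi (c α n : ℝ) (t : ℕ) : ℝ :=
  ∑ s ∈ Finset.Icc 2 t,
    ((-1 : ℝ) ^ s / (s : ℝ) ^ n) * ∏ k ∈ Finset.Icc (s + 1) t, (1 - c / (k : ℝ) ^ α)

lemma Spsi_rec (c α n : ℝ) (t : ℕ) (ht : 1 ≤ t) :
    Spsi c α n (t + 1)
      = (1 - c / ((t : ℝ) + 1) ^ α) * Spsi c α n t + (-1) ^ (t + 1) / ((t : ℝ) + 1) ^ n := by
  unfold Spsi
  rw [Finset.sum_Icc_succ_top (by omega : 2 ≤ t + 1)]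
  have h1 : ∀ s ∈ Finset.Icc 2 t,
      ((-1 : ℝ) ^ s / (s : ℝ) ^ n) * ∏ k ∈ Finset.Icc (s + 1) (t + 1), (1 - c / (k : ℝ) ^ α)
      = (1 - c / ((t : ℝ) + 1) ^ α) *
        (((-1 : ℝ) ^ s / (s : ℝ) ^ n) * ∏ k ∈ Finset.Icc (s + 1) t, (1 - c / (k : ℝ) ^ α)) := by
    intro s hs
    rw [Finset.mem_Icc] at hs
    rw [Finset.prod_Icc_succ_top (by omega : s + 1 ≤ t + 1)]
    push_cast
    ring
  rw [Finset.sum_congr rfl h1, ← Finset.mul_sum]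
  rw [Finset.Icc_eq_empty (by omega : ¬ (t + 1 + 1 ≤ t + 1)), Finset.prod_empty]
  push_cast
  ring

noncomputable def Gf (c α n : ℝ) (t : ℕ) : ℝ := (-1) ^ t * (t : ℝ) ^ n * Spsi c α n t

noncomputable def rr (c α n : ℝ) (t : ℕ) : ℝ :=
  (1 - c / (t : ℝ) ^ α) * ((t : ℝ) / ((t : ℝ) - 1)) ^ n

lemma Gf_rec (c α n : ℝ) (t : ℕ) (ht : 1 ≤ t) :
    Gf c α n (t + 1) = 1 - rr c α n (t + 1) * Gf c α n t := by
  have htpos : (0 : ℝ) < (t : ℝ) := by exact_mod_cast ht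
  have ht1 : (0 : ℝ) < (t : ℝ) + 1 := by linarith
  have hpow : ((t : ℝ) + 1) ^ n = (((t : ℝ) + 1) / (t : ℝ)) ^ n * (t : ℝ) ^ n := by
    rw [← Real.mul_rpow (by positivity) (le_of_lt htpos), div_mul_cancel₀ _ (ne_of_gt htpos)]
  have hne : ((t : ℝ) + 1) ^ n ≠ 0 := by positivity
  unfold Gf rr
  push_cast
  rw [Spsi_rec c α n t ht, add_sub_cancel_right, mul_add]
  have hsq : ((-1 : ℝ) ^ (t + 1)) * ((-1 : ℝ) ^ (t + 1)) = 1 := by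
    rw [← pow_add]; exact Even.neg_one_pow ⟨t + 1, by ring⟩
  have h2 : (-1 : ℝ) ^ (t + 1) * ((t : ℝ) + 1) ^ n * ((-1) ^ (t + 1) / ((t : ℝ) + 1) ^ n) = 1 := by
    calc (-1 : ℝ) ^ (t + 1) * ((t : ℝ) + 1) ^ n * ((-1) ^ (t + 1) / ((t : ℝ) + 1) ^ n)
        = ((-1 : ℝ) ^ (t + 1) * ((-1 : ℝ) ^ (t + 1))) * (((t : ℝ) + 1) ^ n / ((t : ℝ) + 1) ^ n) := by
          ring
      _ = 1 := by rw [hsq, div_self hne, one_mul]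
  have h3 : (-1 : ℝ) ^ (t + 1) * ((t : ℝ) + 1) ^ n * ((1 - c / ((t : ℝ) + 1) ^ α) * Spsi c α n t)
      = -((1 - c / ((t : ℝ) + 1) ^ α) * (((t : ℝ) + 1) / (t : ℝ)) ^ n *
          ((-1) ^ t * (t : ℝ) ^ n * Spsi c α n t)) := by
    rw [hpow, pow_succ]
    ring
  rw [h2, h3]
  ring



lemma bern_upper {n x : ℝ} (hn : 0 ≤ n) (hx0 : 0 ≤ x) (hx1 : x ≤ 1) :
    (1 + x) ^ n ≤ 1 + (n + 2 ^ n) * x := by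
  rcases le_total n 1 with h | h
  · have h1 := rpow_one_add_le_one_add_mul_self (by linarith : (-1 : ℝ) ≤ x) hn h
    have h2 : (0 : ℝ) ≤ 2 ^ n * x := by positivity
    nlinarith
  · have hc := (convexOn_rpow (by linarith : (1:ℝ) ≤ n)).2
      (Set.mem_Ici.mpr (by norm_num : (0:ℝ) ≤ 1))
      (Set.mem_Ici.mpr (by norm_num : (0:ℝ) ≤ 2))
      (by linarith : (0:ℝ) ≤ 1 - x) hx0 (by ring)
    simp only [smul_eq_mul] at hc
    have e1 : (1 - x) * 1 + x * 2 = 1 + x := by ring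
    rw [e1, Real.one_rpow] at hc
    have h2n : (1:ℝ) ≤ 2 ^ n := Real.one_le_rpow (by norm_num) (by linarith)
    have hnx : 0 ≤ n * x := by positivity
    nlinarith

lemma rr_bounds (c α n : ℝ) (hc : 0 < c) (hc2 : c < 2 ^ α) (hα0 : 0 < α) (hn : 0 < n)
    (t : ℕ) (ht : 2 ≤ t) :
    0 ≤ rr c α n t ∧ 1 - rr c α n t ≤ c / (t : ℝ) ^ α ∧
      c / (t : ℝ) ^ α - (n + 2 ^ n) / ((t : ℝ) - 1) ≤ 1 - rr c α n t := by
  set T : ℝ := (t : ℝ) with hT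
  have hT2 : (2 : ℝ) ≤ T := by rw [hT]; exact_mod_cast ht
  have hT1 : (1 : ℝ) ≤ T - 1 := by linarith
  have hTpos : (0 : ℝ) < T := by linarith
  have hTa : (2 : ℝ) ^ α ≤ T ^ α := Real.rpow_le_rpow (by norm_num) hT2 hα0.le
  have hTapos : (0 : ℝ) < T ^ α := Real.rpow_pos_of_pos hTpos α
  have hf0 : 0 ≤ 1 - c / T ^ α := by
    rw [sub_nonneg, div_le_one hTapos]; linarith
  have hf1 : 1 - c / T ^ α ≤ 1 := by
    have : 0 < c / T ^ α := div_pos hc hTapos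
    linarith
  have hbase : T / (T - 1) = 1 + 1 / (T - 1) := by field_simp; ring
  have hx0 : (0 : ℝ) ≤ 1 / (T - 1) := by positivity
  have hx1 : 1 / (T - 1) ≤ 1 := by
    rw [div_le_one (by linarith)]; linarith
  have hg1 : 1 ≤ (T / (T - 1)) ^ n := by
    apply Real.one_le_rpow _ hn.le
    rw [hbase]; linarith
  have hgK : (T / (T - 1)) ^ n ≤ 1 + (n + 2 ^ n) / (T - 1) := by
    rw [hbase]
    calc (1 + 1 / (T - 1)) ^ n ≤ 1 + (n + 2 ^ n) * (1 / (T - 1)) := bern_upper hn.le hx0 hx1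
      _ = 1 + (n + 2 ^ n) / (T - 1) := by ring
  have hg0 : 0 ≤ (T / (T - 1)) ^ n := by linarith
  refine ⟨mul_nonneg hf0 hg0, ?_, ?_⟩
  · have : 1 - c / T ^ α ≤ rr c α n t := by
      unfold rr
      calc 1 - c / T ^ α = (1 - c / T ^ α) * 1 := by ring
        _ ≤ (1 - c / T ^ α) * (T / (T - 1)) ^ n := mul_le_mul_of_nonneg_left hg1 hf0
    linarith
  · have hK0 : (0 : ℝ) ≤ n + 2 ^ n := by positivity
    have : rr c α n t ≤ 1 - c / T ^ α + (n + 2 ^ n) / (T - 1) := by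
      unfold rr
      calc (1 - c / T ^ α) * (T / (T - 1)) ^ n
          ≤ (1 - c / T ^ α) * (1 + (n + 2 ^ n) / (T - 1)) := mul_le_mul_of_nonneg_left hgK hf0
        _ = (1 - c / T ^ α) + (1 - c / T ^ α) * ((n + 2 ^ n) / (T - 1)) := by ring
        _ ≤ (1 - c / T ^ α) + 1 * ((n + 2 ^ n) / (T - 1)) := by
            apply add_le_add_right
            apply mul_le_mul_of_nonneg_right hf1 (by positivity)
        _ = 1 - c / T ^ α + (n + 2 ^ n) / (T - 1) := by ring
    linarith

set_option maxHeartbeats 1000000 in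
lemma rr_diff (c α n : ℝ) (hc : 0 < c) (hc2 : c < 2 ^ α) (hα0 : 0 < α) (hα1 : α < 1)
    (hn : 0 < n) (t : ℕ) (ht : 2 ≤ t) :
    |rr c α n (t + 1) - rr c α n t|
      ≤ 2 ^ n * c / ((t : ℝ) ^ α * t) + 2 ^ n * (n + 2 ^ n) * 2 / (t : ℝ) ^ 2 := by
  set T : ℝ := (t : ℝ) with hT
  have hT2 : (2 : ℝ) ≤ T := by rw [hT]; exact_mod_cast ht
  have hTpos : (0 : ℝ) < T := by linarith
  have hX : (0 : ℝ) < T ^ α := Real.rpow_pos_of_pos hTpos α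
  have hY : (0 : ℝ) < (T + 1) ^ α := Real.rpow_pos_of_pos (by linarith) α
  have hXY : T ^ α ≤ (T + 1) ^ α := Real.rpow_le_rpow hTpos.le (by linarith) hα0.le
  have hTa : (2 : ℝ) ^ α ≤ T ^ α := Real.rpow_le_rpow (by norm_num) hT2 hα0.le
  set F1 : ℝ := 1 - c / T ^ α with hF1
  set F2 : ℝ := 1 - c / (T + 1) ^ α with hF2
  set G1 : ℝ := (T / (T - 1)) ^ n with hG1
  set G2 : ℝ := ((T + 1) / T) ^ n with hG2
  have erw1 : rr c α n t = F1 * G1 := rfl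
  have erw2 : rr c α n (t + 1) = F2 * G2 := by
    unfold rr; push_cast; rw [add_sub_cancel_right]
  -- bounds on F
  have hF10 : 0 ≤ F1 := by
    rw [hF1, sub_nonneg, div_le_one hX]; linarith
  have hF11 : F1 ≤ 1 := by
    have : 0 < c / T ^ α := div_pos hc hX
    rw [hF1]; linarith
  have hF12 : F1 ≤ F2 := by
    rw [hF1, hF2, sub_le_sub_iff_left]
    apply div_le_div_of_nonneg_left hc.le hX hXY
  -- F2 - F1 bound
  have hfdiff : F2 - F1 ≤ c / (T ^ α * T) := by
    have hkey : T / (T + 1) ≤ T ^ α / (T + 1) ^ α := by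
      rw [← Real.div_rpow hTpos.le (by linarith : (0:ℝ) ≤ T + 1)]
      calc T / (T + 1) = (T / (T + 1)) ^ (1 : ℝ) := by rw [Real.rpow_one]
        _ ≤ (T / (T + 1)) ^ α := by
            apply Real.rpow_le_rpow_of_exponent_ge (by positivity)
              (by rw [div_le_one (by linarith)]; linarith) hα1.le
    have e3 : F2 - F1 = c * ((1 - T ^ α / (T + 1) ^ α) * (1 / T ^ α)) := by
      rw [hF1, hF2]
      have hXne : T ^ α ≠ 0 := ne_of_gt hX
      have hYne : (T + 1) ^ α ≠ 0 := ne_of_gt hY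
      field_simp
      ring
    rw [e3]
    have h4 : 1 - T ^ α / (T + 1) ^ α ≤ 1 / T := by
      have : 1 - T / (T + 1) = 1 / (T + 1) := by field_simp; ring
      have h5 : 1 / (T + 1) ≤ 1 / T := by
        apply div_le_div_of_nonneg_left (by norm_num) hTpos (by linarith)
      linarith
    calc c * ((1 - T ^ α / (T + 1) ^ α) * (1 / T ^ α))
        ≤ c * ((1 / T) * (1 / T ^ α)) := by
          apply mul_le_mul_of_nonneg_left _ hc.le
          apply mul_le_mul_of_nonneg_right h4 (by positivity)
      _ = c / (T * T ^ α) := by rw [one_div_mul_one_div, mul_one_div]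
      _ = c / (T ^ α * T) := by rw [mul_comm T (T ^ α)]
  -- bounds on G
  have hbase21 : (T + 1) / T ≤ T / (T - 1) := by
    rw [div_le_div_iff₀ hTpos (by linarith)]
    nlinarith
  have hG21 : G2 ≤ G1 := Real.rpow_le_rpow (by positivity) hbase21 hn.le
  have hG2le : G2 ≤ 2 ^ n := by
    apply Real.rpow_le_rpow (by positivity) _ hn.le
    rw [div_le_iff₀ hTpos]; linarith
  have hG20 : 0 ≤ G2 := Real.rpow_nonneg (by positivity) n
  have hG1ge : 1 ≤ G2 := by
    apply Real.one_le_rpow _ hn.le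
    rw [le_div_iff₀ hTpos]; linarith
  -- G1 - G2 bound
  have hgdiff : G1 - G2 ≤ 2 ^ n * (n + 2 ^ n) * 2 / T ^ 2 := by
    have hT21 : (0 : ℝ) < T ^ 2 - 1 := by nlinarith
    have hne1 : T - 1 ≠ 0 := by intro h; rw [sub_eq_zero] at h; linarith
    have hne2 : T ≠ 0 := ne_of_gt hTpos
    have hne3 : T ^ 2 - 1 ≠ 0 := ne_of_gt hT21
    have hfact : T / (T - 1) = ((T + 1) / T) * (1 + 1 / (T ^ 2 - 1)) := by
      rw [show (1 : ℝ) + 1 / (T ^ 2 - 1) = T ^ 2 / (T ^ 2 - 1) by field_simp; ring]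
      rw [div_mul_div_comm, div_eq_div_iff hne1 (by positivity)]
      ring
    have hx0 : (0 : ℝ) ≤ 1 / (T ^ 2 - 1) := by positivity
    have hx1 : 1 / (T ^ 2 - 1) ≤ 1 := by
      rw [div_le_one hT21]; nlinarith
    have e5 : G1 = G2 * (1 + 1 / (T ^ 2 - 1)) ^ n := by
      rw [hG1, hG2, hfact, Real.mul_rpow (by positivity) (by positivity)]
    have e6 : (1 + 1 / (T ^ 2 - 1)) ^ n ≤ 1 + (n + 2 ^ n) * (1 / (T ^ 2 - 1)) :=
      bern_upper hn.le hx0 hx1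
    have e7 : G1 - G2 ≤ 2 ^ n * ((n + 2 ^ n) * (1 / (T ^ 2 - 1))) := by
      have h9 : G1 ≤ G2 * (1 + (n + 2 ^ n) * (1 / (T ^ 2 - 1))) := by
        rw [e5]; exact mul_le_mul_of_nonneg_left e6 hG20
      rw [mul_add, mul_one] at h9
      have h10 : G2 * ((n + 2 ^ n) * (1 / (T ^ 2 - 1)))
          ≤ 2 ^ n * ((n + 2 ^ n) * (1 / (T ^ 2 - 1))) :=
        mul_le_mul_of_nonneg_right hG2le (by positivity)
      linarith
    have e8 : 1 / (T ^ 2 - 1) ≤ 2 / T ^ 2 := by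
      rw [div_le_div_iff₀ hT21 (by positivity)]
      nlinarith
    calc G1 - G2 ≤ 2 ^ n * ((n + 2 ^ n) * (1 / (T ^ 2 - 1))) := e7
      _ ≤ 2 ^ n * ((n + 2 ^ n) * (2 / T ^ 2)) := by
          apply mul_le_mul_of_nonneg_left _ (by positivity : (0:ℝ) ≤ (2:ℝ) ^ n)
          exact mul_le_mul_of_nonneg_left e8 (by positivity)
      _ = 2 ^ n * (n + 2 ^ n) * 2 / T ^ 2 := by ring
  -- combine
  rw [erw1, erw2]
  have edecomp : F2 * G2 - F1 * G1 = G2 * (F2 - F1) - F1 * (G1 - G2) := by ring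
  have h1 : |F2 * G2 - F1 * G1| ≤ G2 * (F2 - F1) + F1 * (G1 - G2) := by
    rw [edecomp]
    have a1 : 0 ≤ G2 * (F2 - F1) := mul_nonneg hG20 (by linarith)
    have a2 : 0 ≤ F1 * (G1 - G2) := mul_nonneg hF10 (by linarith)
    rw [abs_sub_le_iff]
    constructor <;> linarith
  have h2 : G2 * (F2 - F1) ≤ 2 ^ n * (c / (T ^ α * T)) := by
    calc G2 * (F2 - F1) ≤ G2 * (c / (T ^ α * T)) :=
          mul_le_mul_of_nonneg_left hfdiff hG20
      _ ≤ 2 ^ n * (c / (T ^ α * T)) :=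
          mul_le_mul_of_nonneg_right hG2le (by positivity)
  have h3 : F1 * (G1 - G2) ≤ 2 ^ n * (n + 2 ^ n) * 2 / T ^ 2 := by
    calc F1 * (G1 - G2) ≤ 1 * (G1 - G2) :=
          mul_le_mul_of_nonneg_right hF11 (by linarith)
      _ = G1 - G2 := one_mul _
      _ ≤ 2 ^ n * (n + 2 ^ n) * 2 / T ^ 2 := hgdiff
  calc |F2 * G2 - F1 * G1| ≤ G2 * (F2 - F1) + F1 * (G1 - G2) := h1
    _ ≤ 2 ^ n * (c / (T ^ α * T)) + 2 ^ n * (n + 2 ^ n) * 2 / T ^ 2 := add_le_add h2 h3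
    _ = 2 ^ n * c / (T ^ α * T) + 2 ^ n * (n + 2 ^ n) * 2 / T ^ 2 := by
        ring



/-- If `x (i+1) ≤ (1 - b i) * x i + (ε/2) * b i` with `b i ∈ [0,1]` and divergent sums of `b`,
then eventually `x i ≤ 2 * ε`. -/
lemma contraction_lemma (x b : ℕ → ℝ) (ε : ℝ) (hε : 0 < ε)
    (hx0 : ∀ i, 0 ≤ x i) (hb0 : ∀ i, 0 ≤ b i) (hb1 : ∀ i, b i ≤ 1)
    (hrec : ∀ i, x (i + 1) ≤ (1 - b i) * x i + (ε / 2) * b i)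
    (hdiv : Tendsto (fun m => ∑ i ∈ Finset.range m, b i) atTop atTop) :
    ∀ᶠ i in atTop, x i ≤ 2 * ε := by
  set y : ℕ → ℝ := fun i => max (x i - ε) 0 with hy
  have hy0 : ∀ i, 0 ≤ y i := fun i => le_max_right _ _
  have hystep : ∀ i, y (i + 1) ≤ (1 - b i) * y i := by
    intro i
    have h1b : 0 ≤ 1 - b i := by linarith [hb1 i]
    rcases le_or_gt (x (i + 1)) ε with h | h
    · have : y (i + 1) = 0 := max_eq_right (by linarith)
      rw [this]
      positivity
    · have hyi1 : y (i + 1) = x (i + 1) - ε := max_eq_left (by linarith)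
      have hxy : x i - ε ≤ y i := le_max_left _ _
      have : x (i + 1) - ε ≤ (1 - b i) * (x i - ε) - (ε / 2) * b i := by
        have := hrec i
        nlinarith
      rw [hyi1]
      calc x (i + 1) - ε ≤ (1 - b i) * (x i - ε) - (ε / 2) * b i := this
        _ ≤ (1 - b i) * (x i - ε) := by nlinarith [hb0 i, hε.le]
        _ ≤ (1 - b i) * y i := by exact mul_le_mul_of_nonneg_left hxy h1b
  have hprod : ∀ m, y m ≤ y 0 * ∏ i ∈ Finset.range m, (1 - b i) := by
    intro m
    induction m with
    | zero => simp
    | succ m ih =>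
      have h1b : 0 ≤ 1 - b m := by linarith [hb1 m]
      calc y (m + 1) ≤ (1 - b m) * y m := hystep m
        _ ≤ (1 - b m) * (y 0 * ∏ i ∈ Finset.range m, (1 - b i)) :=
            mul_le_mul_of_nonneg_left ih h1b
        _ = y 0 * ∏ i ∈ Finset.range (m + 1), (1 - b i) := by
            rw [Finset.prod_range_succ]; ring
  have hexp : ∀ m, (∏ i ∈ Finset.range m, (1 - b i)) ≤ Real.exp (-(∑ i ∈ Finset.range m, b i)) := by
    intro m
    rw [← Finset.sum_neg_distrib, Real.exp_sum]
    apply Finset.prod_le_prod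
    · intro i _; linarith [hb1 i]
    · intro i _; linarith [Real.add_one_le_exp (-(b i))]
  have htend : Tendsto (fun m => y 0 * Real.exp (-(∑ i ∈ Finset.range m, b i))) atTop (nhds 0) := by
    have h1 : Tendsto (fun m => Real.exp (-(∑ i ∈ Finset.range m, b i))) atTop (nhds 0) :=
      Real.tendsto_exp_atBot.comp (tendsto_neg_atBot_iff.mpr hdiv)
    simpa using h1.const_mul (y 0)
  have hev : ∀ᶠ m in atTop, y 0 * Real.exp (-(∑ i ∈ Finset.range m, b i)) < ε :=
    htend.eventually_lt_const hε
  filter_upwards [hev] with m hm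
  have hym : y m ≤ y 0 * Real.exp (-(∑ i ∈ Finset.range m, b i)) := by
    calc y m ≤ y 0 * ∏ i ∈ Finset.range m, (1 - b i) := hprod m
      _ ≤ y 0 * Real.exp (-(∑ i ∈ Finset.range m, b i)) :=
          mul_le_mul_of_nonneg_left (hexp m) (hy0 0)
  have : x m - ε ≤ y m := le_max_left _ _
  linarith



lemma diverge_aux (C β : ℝ) (hC : 0 < C) (hβ0 : 0 < β) (hβ1 : β ≤ 1) (a : ℕ) (ha : 1 ≤ a) :
    Tendsto (fun m => ∑ i ∈ Finset.range m, C / ((a + 2 * i : ℕ) : ℝ) ^ β) atTop atTop := by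
  have hpos : ∀ i : ℕ, 0 ≤ C / ((a + 2 * i : ℕ) : ℝ) ^ β := by
    intro i; positivity
  rw [← not_summable_iff_tendsto_nat_atTop_of_nonneg hpos]
  intro hsum
  -- compare with C/(a+2)^β * (i+1)^(-β)
  have hcomp : ∀ i : ℕ, C / ((a + 2 : ℕ) : ℝ) ^ β * ((i + 1 : ℕ) : ℝ) ^ (-β)
      ≤ C / ((a + 2 * i : ℕ) : ℝ) ^ β := by
    intro i
    have h1 : ((a + 2 * i : ℕ) : ℝ) ≤ ((a + 2 : ℕ) : ℝ) * ((i + 1 : ℕ) : ℝ) := by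
      push_cast
      have : (a : ℝ) * i ≥ 0 := by positivity
      nlinarith
    have h2 : (0:ℝ) < ((a + 2 * i : ℕ) : ℝ) := by
      have : 1 ≤ a + 2 * i := by omega
      exact_mod_cast Nat.lt_of_lt_of_le Nat.zero_lt_one this
    have h3 : ((a + 2 * i : ℕ) : ℝ) ^ β ≤ (((a + 2 : ℕ) : ℝ) * ((i + 1 : ℕ) : ℝ)) ^ β :=
      Real.rpow_le_rpow h2.le h1 hβ0.le
    have h4 : (((a + 2 : ℕ) : ℝ) * ((i + 1 : ℕ) : ℝ)) ^ β
        = ((a + 2 : ℕ) : ℝ) ^ β * ((i + 1 : ℕ) : ℝ) ^ β :=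
      Real.mul_rpow (by positivity) (by positivity)
    have h5 : (0:ℝ) < ((a + 2 * i : ℕ) : ℝ) ^ β := Real.rpow_pos_of_pos h2 β
    have h6 : (0:ℝ) < ((a + 2 : ℕ) : ℝ) ^ β := by positivity
    have h7 : (0:ℝ) < ((i + 1 : ℕ) : ℝ) ^ β := by positivity
    rw [Real.rpow_neg (by positivity)]
    rw [div_mul_eq_mul_div, div_le_div_iff₀ (by positivity) h5]
    calc C * (((i + 1 : ℕ) : ℝ) ^ β)⁻¹ * ((a + 2 * i : ℕ) : ℝ) ^ β
        ≤ C * (((i + 1 : ℕ) : ℝ) ^ β)⁻¹ * (((a + 2 : ℕ) : ℝ) ^ β * ((i + 1 : ℕ) : ℝ) ^ β) := by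
          rw [← h4]
          exact mul_le_mul_of_nonneg_left h3 (by positivity)
      _ = C * ((a + 2 : ℕ) : ℝ) ^ β := by
          field_simp
  have hsum2 : Summable (fun i : ℕ => C / ((a + 2 : ℕ) : ℝ) ^ β * ((i + 1 : ℕ) : ℝ) ^ (-β)) := by
    apply Summable.of_nonneg_of_le _ hcomp hsum
    intro i
    positivity
  have hne : C / ((a + 2 : ℕ) : ℝ) ^ β ≠ 0 := by positivity
  have hsum3 : Summable (fun i : ℕ => ((i + 1 : ℕ) : ℝ) ^ (-β)) := by
    rwa [summable_mul_left_iff hne] at hsum2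
  have hsum4 : Summable (fun i : ℕ => (i : ℝ) ^ (-β)) :=
    (summable_nat_add_iff 1).mp hsum3
  rw [Real.summable_nat_rpow] at hsum4
  linarith

set_option maxHeartbeats 2000000 in
theorem alt_sum_psi1_alpha_lt_one
    (μ η α n : ℝ) (hμ : 0 < μ) (hη : 0 < η) (hα0 : 0 < α) (hα1 : α < 1)
    (hme : μ * η < 2 ^ α) (hn : 0 < n) :
    Filter.Tendsto
      (fun t : ℕ => (t : ℝ) ^ n *
          (∑ s ∈ Finset.Icc 2 t,
            ((-1 : ℝ) ^ s / (s : ℝ) ^ n) * ∏ k ∈ Finset.Icc (s + 1) t, (1 - μ * η / (k : ℝ) ^ α))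
        - (-1 : ℝ) ^ t / 2)
      Filter.atTop (nhds 0) ∧
    (fun t : ℕ => |∑ s ∈ Finset.Icc 2 t,
        ((-1 : ℝ) ^ s / (s : ℝ) ^ n) * ∏ k ∈ Finset.Icc (s + 1) t, (1 - μ * η / (k : ℝ) ^ α)|)
      =Θ[Filter.atTop] (fun t : ℕ => 1 / (t : ℝ) ^ n) := by
  have hrepr : ∀ t : ℕ, (∑ s ∈ Finset.Icc 2 t,
      ((-1 : ℝ) ^ s / (s : ℝ) ^ n) * ∏ k ∈ Finset.Icc (s + 1) t, (1 - μ * η / (k : ℝ) ^ α))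
      = Spsi (μ * η) α n t := fun _ => rfl
  simp only [hrepr]
  set c : ℝ := μ * η with hcdef
  have hc : 0 < c := mul_pos hμ hη
  have hc2 : c < 2 ^ α := hme
  set e : ℕ → ℝ := fun t => Gf c α n t - 1 / 2 with hedef
  have erec : ∀ t : ℕ, 1 ≤ t →
      e (t + 1) = -(rr c α n (t + 1)) * e t + (1 - rr c α n (t + 1)) / 2 := by
    intro t ht
    simp only [hedef]
    rw [Gf_rec c α n t ht]
    ring
  have hK : (0 : ℝ) < n + 2 ^ n := by positivity
  -- MAIN convergence
  have heconv : Tendsto e atTop (nhds 0) := by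
    rw [NormedAddCommGroup.tendsto_nhds_zero]
    intro ε hε
    set ε' : ℝ := ε / 4 with hε'def
    have hε' : 0 < ε' := by positivity
    have tendA : Tendsto (fun t : ℕ => (t : ℝ) ^ (α - 1)) atTop (nhds 0) := by
      have h := (tendsto_rpow_neg_atTop (by linarith : (0:ℝ) < 1 - α)).comp
        tendsto_natCast_atTop_atTop (α := ℕ)
      simpa [Function.comp_def, neg_sub] using h
    have tendB : Tendsto (fun t : ℕ => c * (t : ℝ) ^ (-α)) atTop (nhds 0) := by
      have h := (tendsto_rpow_neg_atTop hα0).comp tendsto_natCast_atTop_atTop (α := ℕ)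
      have h2 := h.const_mul c
      simpa [Function.comp] using h2
    have hdivform : ∀ t : ℕ, c / (t : ℝ) ^ α = c * (t : ℝ) ^ (-α) := by
      intro t
      rw [Real.rpow_neg (Nat.cast_nonneg t), div_eq_mul_inv]
    have hev : ∀ᶠ t : ℕ in atTop, 2 ≤ t ∧
        (n + 2 ^ n) / ((t : ℝ) - 1) ≤ c / 2 / (t : ℝ) ^ α ∧
        c / (t : ℝ) ^ α ≤ 1 ∧ c / (t : ℝ) ^ α ≤ ε' / 2 ∧
        2 ^ n * c / ((t : ℝ) ^ α * (t : ℝ)) + 2 ^ n * (n + 2 ^ n) * 2 / (t : ℝ) ^ 2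
          ≤ ε' * c / 4 / (t : ℝ) ^ α := by
      have e1 : ∀ᶠ t : ℕ in atTop, (t : ℝ) ^ (α - 1) < c / (4 * (n + 2 ^ n)) :=
        tendA.eventually_lt_const (by positivity)
      have e2a : ∀ᶠ t : ℕ in atTop, c * (t : ℝ) ^ (-α) < 1 :=
        tendB.eventually_lt_const one_pos
      have e2b : ∀ᶠ t : ℕ in atTop, c * (t : ℝ) ^ (-α) < ε' / 2 :=
        tendB.eventually_lt_const (by positivity)
      have e3 : ∀ᶠ t : ℕ in atTop, (2 ^ n * c) / (t : ℝ) < ε' * c / 8 :=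
        (tendsto_const_div_atTop_nhds_zero_nat (2 ^ n * c)).eventually_lt_const (by positivity)
      have e4 : ∀ᶠ t : ℕ in atTop, (2 ^ n * (n + 2 ^ n) * 2) / (t : ℝ) < ε' * c / 8 :=
        (tendsto_const_div_atTop_nhds_zero_nat _).eventually_lt_const (by positivity)
      have e5 : ∀ᶠ t : ℕ in atTop, 2 ≤ t := eventually_ge_atTop 2
      filter_upwards [e1, e2a, e2b, e3, e4, e5] with t h1 h2a h2b h3 h4 h5
      have hT2 : (2 : ℝ) ≤ (t : ℝ) := by exact_mod_cast h5
      have hTpos : (0 : ℝ) < (t : ℝ) := by linarith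
      have hXpos : (0 : ℝ) < (t : ℝ) ^ α := Real.rpow_pos_of_pos hTpos α
      refine ⟨h5, ?_, ?_, ?_, ?_⟩
      · rw [div_le_div_iff₀ (by linarith) hXpos]
        have hTα : (t : ℝ) ^ α = (t : ℝ) ^ (α - 1) * (t : ℝ) := by
          have h := Real.rpow_add hTpos (α - 1) 1
          rw [show α - 1 + 1 = α from by ring, Real.rpow_one] at h
          exact h
        rw [hTα]
        have f1 : (n + 2 ^ n) * ((t : ℝ) ^ (α - 1) * (t : ℝ))
            ≤ (n + 2 ^ n) * (c / (4 * (n + 2 ^ n)) * (t : ℝ)) := by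
          apply mul_le_mul_of_nonneg_left _ hK.le
          exact mul_le_mul_of_nonneg_right h1.le hTpos.le
        have f2 : (n + 2 ^ n) * (c / (4 * (n + 2 ^ n)) * (t : ℝ)) = c * (t : ℝ) / 4 := by
          field_simp
        have f3 : c * (t : ℝ) / 4 ≤ c / 2 * ((t : ℝ) - 1) := by nlinarith
        linarith
      · rw [hdivform t]; linarith
      · rw [hdivform t]; linarith
      · have htα_le : (t : ℝ) ^ α ≤ (t : ℝ) := by
          calc (t : ℝ) ^ α ≤ (t : ℝ) ^ (1 : ℝ) :=
                Real.rpow_le_rpow_of_exponent_le (by linarith) hα1.le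
            _ = (t : ℝ) := Real.rpow_one _
        have k1 : 2 ^ n * c / ((t : ℝ) ^ α * (t : ℝ)) = (2 ^ n * c / (t : ℝ)) * (1 / (t : ℝ) ^ α) := by
          rw [mul_comm ((t : ℝ) ^ α) (t : ℝ), ← div_div, div_eq_mul_one_div]
        have k2 : 2 ^ n * (n + 2 ^ n) * 2 / (t : ℝ) ^ 2
            = (2 ^ n * (n + 2 ^ n) * 2 / (t : ℝ)) * (1 / (t : ℝ)) := by
          rw [sq, ← div_div, div_eq_mul_one_div]
        have k3 : 1 / (t : ℝ) ≤ 1 / (t : ℝ) ^ α := one_div_le_one_div_of_le hXpos htα_le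
        have k4 : (2 ^ n * c / (t : ℝ)) * (1 / (t : ℝ) ^ α) ≤ (ε' * c / 8) * (1 / (t : ℝ) ^ α) :=
          mul_le_mul_of_nonneg_right h3.le (by positivity)
        have k5 : (2 ^ n * (n + 2 ^ n) * 2 / (t : ℝ)) * (1 / (t : ℝ)) ≤ (ε' * c / 8) * (1 / (t : ℝ)) :=
          mul_le_mul_of_nonneg_right h4.le (by positivity)
        have k6 : (ε' * c / 8) * (1 / (t : ℝ)) ≤ (ε' * c / 8) * (1 / (t : ℝ) ^ α) :=
          mul_le_mul_of_nonneg_left k3 (by positivity)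
        have k7 : ε' * c / 4 / (t : ℝ) ^ α
            = (ε' * c / 8) * (1 / (t : ℝ) ^ α) + (ε' * c / 8) * (1 / (t : ℝ) ^ α) := by ring
        rw [k1, k2, k7]
        linarith
    obtain ⟨T₀, hT₀⟩ := eventually_atTop.mp hev
    have hT₀2 : 2 ≤ T₀ := (hT₀ T₀ le_rfl).1
    have hbprop : ∀ t, T₀ ≤ t → 0 ≤ 1 - rr c α n t ∧ 1 - rr c α n t ≤ 1 ∧
        c / 2 / (t : ℝ) ^ α ≤ 1 - rr c α n t := by
      intro t ht
      obtain ⟨h2, hA1, hB, hC, hD⟩ := hT₀ t ht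
      obtain ⟨hr0, hub, hlb⟩ := rr_bounds c α n hc hc2 hα0 hn t h2
      have hhalf : (0 : ℝ) ≤ c / 2 / (t : ℝ) ^ α := by positivity
      have hXeq : c / (t : ℝ) ^ α = 2 * (c / 2 / (t : ℝ) ^ α) := by ring
      exact ⟨by linarith, by linarith, by linarith⟩
    have hstep : ∀ t, T₀ ≤ t →
        |e (t + 2)| ≤ (1 - (1 - rr c α n (t + 1))) * |e t| + ε' / 2 * (1 - rr c α n (t + 1)) := by
      intro t ht
      have ht1 : T₀ ≤ t + 1 := by omega
      have ht2' : T₀ ≤ t + 2 := by omega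
      have h2t : 2 ≤ t := le_trans hT₀2 ht
      obtain ⟨hb0₁, hb1₁, hbl₁⟩ := hbprop (t + 1) ht1
      obtain ⟨hb0₂, hb1₂, hbl₂⟩ := hbprop (t + 2) ht2'
      have hr1_0 : 0 ≤ rr c α n (t + 1) := (rr_bounds c α n hc hc2 hα0 hn (t + 1) (by omega)).1
      have hr2_0 : 0 ≤ rr c α n (t + 2) := (rr_bounds c α n hc hc2 hα0 hn (t + 2) (by omega)).1
      have he2 : e (t + 2) = rr c α n (t + 2) * rr c α n (t + 1) * e t
          + (((1 - rr c α n (t + 2)) / 2 - (1 - rr c α n (t + 1)) / 2)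
            + (1 - rr c α n (t + 2)) * ((1 - rr c α n (t + 1)) / 2)) := by
        have r1 := erec t (by omega)
        have r2 := erec (t + 1) (by omega)
        rw [show t + 1 + 1 = t + 2 from rfl] at r2
        rw [r2, r1]
        ring
      have hd2small : 1 - rr c α n (t + 2) ≤ ε' / 2 := by
        have hub2 := (rr_bounds c α n hc hc2 hα0 hn (t + 2) (by omega)).2.1
        have hC2 := (hT₀ (t + 2) ht2').2.2.2.1
        linarith
      have hddiff : |(1 - rr c α n (t + 2)) / 2 - (1 - rr c α n (t + 1)) / 2|
          ≤ ε' / 2 * ((1 - rr c α n (t + 1)) / 2) := by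
        have hdd := rr_diff c α n hc hc2 hα0 hα1 hn (t + 1) (by omega)
        have hD1 := (hT₀ (t + 1) ht1).2.2.2.2
        rw [show t + 1 + 1 = t + 2 from rfl] at hdd
        have habs2 : |rr c α n (t + 2) - rr c α n (t + 1)| ≤ ε' * c / 4 / ((t + 1 : ℕ) : ℝ) ^ α :=
          le_trans hdd hD1
        have e9 : |(1 - rr c α n (t + 2)) / 2 - (1 - rr c α n (t + 1)) / 2|
            = |rr c α n (t + 2) - rr c α n (t + 1)| / 2 := by
          rw [show (1 - rr c α n (t + 2)) / 2 - (1 - rr c α n (t + 1)) / 2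
            = -((rr c α n (t + 2) - rr c α n (t + 1)) / 2) from by ring, abs_neg, abs_div, abs_two]
        rw [e9]
        have heq : ε' * c / 4 / ((t + 1 : ℕ) : ℝ) ^ α
            = ε' / 2 * (c / 2 / ((t + 1 : ℕ) : ℝ) ^ α) := by ring
        have m1 : ε' / 2 * (c / 2 / ((t + 1 : ℕ) : ℝ) ^ α) ≤ ε' / 2 * (1 - rr c α n (t + 1)) :=
          mul_le_mul_of_nonneg_left hbl₁ (by positivity)
        linarith
      have htri : |e (t + 2)| ≤ rr c α n (t + 2) * rr c α n (t + 1) * |e t|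
          + |(1 - rr c α n (t + 2)) / 2 - (1 - rr c α n (t + 1)) / 2|
          + (1 - rr c α n (t + 2)) * ((1 - rr c α n (t + 1)) / 2) := by
        rw [he2]
        refine le_trans (abs_add_le _ _) ?_
        have habsmul : |rr c α n (t + 2) * rr c α n (t + 1) * e t|
            = rr c α n (t + 2) * rr c α n (t + 1) * |e t| := by
          rw [abs_mul, abs_of_nonneg (mul_nonneg hr2_0 hr1_0)]
        rw [habsmul, add_assoc]
        apply add_le_add_right
        refine le_trans (abs_add_le _ _) ?_
        apply add_le_add_right
        rw [abs_of_nonneg (mul_nonneg (by linarith) (by linarith))]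
      have ha2le1 : rr c α n (t + 2) ≤ 1 := by linarith
      have key1 : rr c α n (t + 2) * rr c α n (t + 1) * |e t| ≤ rr c α n (t + 1) * |e t| := by
        have haux := mul_nonneg (by linarith : (0:ℝ) ≤ 1 - rr c α n (t + 2))
          (mul_nonneg hr1_0 (abs_nonneg (e t)))
        nlinarith [haux]
      have key2 : (1 - rr c α n (t + 2)) * ((1 - rr c α n (t + 1)) / 2)
          ≤ ε' / 2 * ((1 - rr c α n (t + 1)) / 2) :=
        mul_le_mul_of_nonneg_right hd2small (by linarith)
      have hfin : (1 - (1 - rr c α n (t + 1))) * |e t| = rr c α n (t + 1) * |e t| := by ring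
      rw [hfin]
      linarith
    have happly : ∀ p : ℕ, ∀ᶠ i : ℕ in atTop, |e (T₀ + p + 2 * i)| ≤ 2 * ε' := by
      intro p
      apply contraction_lemma (fun i => |e (T₀ + p + 2 * i)|)
        (fun i => 1 - rr c α n (T₀ + p + 2 * i + 1)) ε' hε'
      · intro i; exact abs_nonneg _
      · intro i; exact (hbprop (T₀ + p + 2 * i + 1) (by omega)).1
      · intro i; exact (hbprop (T₀ + p + 2 * i + 1) (by omega)).2.1
      · intro i
        have h := hstep (T₀ + p + 2 * i) (by omega)
        have hidx : T₀ + p + 2 * (i + 1) = T₀ + p + 2 * i + 2 := by ring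
        simp only [hidx]
        linarith
      · apply tendsto_atTop_mono _
          (diverge_aux (c / 2) α (by positivity) hα0 hα1.le (T₀ + p + 1) (by omega))
        intro m
        apply Finset.sum_le_sum
        intro i _
        rw [show T₀ + p + 1 + 2 * i = T₀ + p + 2 * i + 1 from by ring]
        exact (hbprop (T₀ + p + 2 * i + 1) (by omega)).2.2
    obtain ⟨I0, hI0⟩ := eventually_atTop.mp (happly 0)
    obtain ⟨I1, hI1⟩ := eventually_atTop.mp (happly 1)
    rw [eventually_atTop]
    refine ⟨T₀ + 2 * I0 + 2 * I1 + 2, ?_⟩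
    intro t ht
    rw [Real.norm_eq_abs]
    have hbound : |e t| ≤ 2 * ε' := by
      rcases Nat.even_or_odd (t - T₀) with ⟨i, hi⟩ | ⟨i, hi⟩
      · have hteq : t = T₀ + 0 + 2 * i := by omega
        rw [hteq]
        exact hI0 i (by omega)
      · have hteq : t = T₀ + 1 + 2 * i := by omega
        rw [hteq]
        exact hI1 i (by omega)
    have h2e : 2 * ε' = ε / 2 := by rw [hε'def]; ring
    linarith
  have habs : Tendsto (fun t => |e t|) atTop (nhds 0) := by
    have h := heconv.abs
    simpa using h
  constructor
  · have hfun : ∀ t : ℕ, (-1 : ℝ) ^ t * e t = (t : ℝ) ^ n * Spsi c α n t - (-1 : ℝ) ^ t / 2 := by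
      intro t
      have hsq : ((-1 : ℝ) ^ t) * ((-1 : ℝ) ^ t) = 1 := by
        rw [← pow_add]; exact Even.neg_one_pow ⟨t, by ring⟩
      simp only [hedef]
      unfold Gf
      linear_combination ((t : ℝ) ^ n * Spsi c α n t) * hsq
    have hbnd : ∀ t : ℕ, ‖(-1 : ℝ) ^ t * e t‖ ≤ |e t| := by
      intro t
      rw [Real.norm_eq_abs, abs_mul, abs_pow, abs_neg, abs_one, one_pow, one_mul]
    exact (squeeze_zero_norm hbnd habs).congr hfun
  · have h14 : ∀ᶠ t : ℕ in atTop, |e t| < 1 / 4 := habs.eventually_lt_const (by norm_num)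
    have h1le : ∀ᶠ t : ℕ in atTop, 1 ≤ t := eventually_ge_atTop 1
    have hmain : ∀ t : ℕ, |e t| < 1 / 4 → 1 ≤ t →
        1 / 4 ≤ (t : ℝ) ^ n * |Spsi c α n t| ∧ (t : ℝ) ^ n * |Spsi c α n t| ≤ 3 / 4 := by
      intro t h4 h1t
      have htpos : (0 : ℝ) < (t : ℝ) := by exact_mod_cast h1t
      have hpow : (0 : ℝ) < (t : ℝ) ^ n := Real.rpow_pos_of_pos htpos n
      have heq : Gf c α n t = e t + 1 / 2 := by simp [hedef]
      obtain ⟨hl, hr⟩ := abs_lt.mp h4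
      have hub : Gf c α n t ≤ 3 / 4 := by rw [heq]; linarith
      have hlb : 1 / 4 ≤ Gf c α n t := by rw [heq]; linarith
      have hGfeq : |Gf c α n t| = (t : ℝ) ^ n * |Spsi c α n t| := by
        unfold Gf
        rw [abs_mul, abs_mul, abs_pow, abs_neg, abs_one, one_pow, one_mul,
          abs_of_pos hpow]
      have habsGf : |Gf c α n t| = Gf c α n t := abs_of_pos (by linarith)
      rw [← hGfeq, habsGf]
      exact ⟨hlb, hub⟩
    constructor
    · rw [Asymptotics.isBigO_iff]
      refine ⟨1, ?_⟩
      filter_upwards [h14, h1le] with t h4 h1t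
      obtain ⟨hlo, hhi⟩ := hmain t h4 h1t
      have htpos : (0 : ℝ) < (t : ℝ) := by exact_mod_cast h1t
      have hpow : (0 : ℝ) < (t : ℝ) ^ n := Real.rpow_pos_of_pos htpos n
      rw [Real.norm_eq_abs, Real.norm_eq_abs, abs_abs, one_mul,
        abs_of_nonneg (by positivity : (0 : ℝ) ≤ 1 / (t : ℝ) ^ n), le_div_iff₀ hpow]
      nlinarith
    · rw [Asymptotics.isBigO_iff]
      refine ⟨4, ?_⟩
      filter_upwards [h14, h1le] with t h4 h1t
      obtain ⟨hlo, hhi⟩ := hmain t h4 h1t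
      have htpos : (0 : ℝ) < (t : ℝ) := by exact_mod_cast h1t
      have hpow : (0 : ℝ) < (t : ℝ) ^ n := Real.rpow_pos_of_pos htpos n
      rw [Real.norm_eq_abs, Real.norm_eq_abs, abs_abs,
        abs_of_nonneg (by positivity : (0 : ℝ) ≤ 1 / (t : ℝ) ^ n), div_le_iff₀ hpow]
      nlinarith
end

section
/- Let μ, G > 0, β ∈ [0,1), T > 1, and suppose η satisfies c₁(1+β)/(μT(1-β)) < η < c₂(1+β)/(μT(1-β)) for constants 0 < c₁ < c₂ ≤ 2. Then the amplitude |y| = η(1-β)G / (2(1+β) - μη(1-β)) of the limit cycle satisfies c₁G/(μ(2T - c₁)) ≤ |y| ≤ c₂G/(μ(2T - c₂)); in particular |y| = Θ(G/(μT)). -/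
theorem limit_cycle_amplitude_bounds
    (μ G β η c₁ c₂ : ℝ) (T : ℕ)
    (hμ : 0 < μ) (hG : 0 < G) (hβ0 : 0 ≤ β) (hβ1 : β < 1) (hT : 1 < T)
    (hc1 : 0 < c₁) (hc12 : c₁ < c₂) (hc2 : c₂ ≤ 2)
    (hηlo : c₁ * (1 + β) / (μ * (T : ℝ) * (1 - β)) < η)
    (hηhi : η < c₂ * (1 + β) / (μ * (T : ℝ) * (1 - β))) :
    c₁ * G / (μ * (2 * (T : ℝ) - c₁)) ≤ η * (1 - β) * G / (2 * (1 + β) - μ * η * (1 - β)) ∧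
    η * (1 - β) * G / (2 * (1 + β) - μ * η * (1 - β)) ≤ c₂ * G / (μ * (2 * (T : ℝ) - c₂)) := by
  have hT2 : (2 : ℝ) ≤ (T : ℝ) := by exact_mod_cast hT
  have hb : 0 < 1 - β := by linarith
  have ha : 0 < 1 + β := by linarith
  have hμT : 0 < μ * (T : ℝ) * (1 - β) := by positivity
  have h1 : c₁ * (1 + β) < μ * η * (1 - β) * (T : ℝ) := by
    have := (div_lt_iff₀ hμT).mp hηlo
    nlinarith
  have h2 : μ * η * (1 - β) * (T : ℝ) < c₂ * (1 + β) := by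
    have := (lt_div_iff₀ hμT).mp hηhi
    nlinarith
  have hη : 0 < η := by
    have : 0 < c₁ * (1 + β) / (μ * (T : ℝ) * (1 - β)) := by positivity
    linarith
  have hden : 0 < 2 * (1 + β) - μ * η * (1 - β) := by nlinarith
  have hd1 : 0 < μ * (2 * (T : ℝ) - c₁) := by nlinarith
  have hd2 : 0 < μ * (2 * (T : ℝ) - c₂) := by nlinarith
  constructor
  · rw [div_le_div_iff₀ hd1 hden]
    nlinarith [mul_lt_mul_of_pos_left h1 hG]
  · rw [div_le_div_iff₀ hden hd2]
    nlinarith [mul_lt_mul_of_pos_left h2 hG]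
end
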